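/- arXiv:2301.00782 — 9 statements merged into one kernel-verified Lean document; each statement's English description precedes it below -/
import Mathlib

section
/- Let d ≥ 1 and ν ≥ 0, and let (F,G) : ℝ → ℝ² solve the ODE system F' = -F² - G - νF, G' = F - d·F·G. Then the quantity (1 - d·G(t))·exp(d·∫₀ᵗ F(s) ds) is constant in time; in particular, the sign of 1 - d·G(t) equals the sign of 1 - d·G(0) for all t. -/
/-- Along solutions of the characteristic ODE system `F' = -F² - G - νF`,
`G' = F - d·F·G`, the quantity `(1 - d·G(t))·exp(d·∫₀ᵗ F)` is constant;
in particular the sign of `1 - d·G(t)` is that of `1 - d·G(0)`. -/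
theorem stmt0 (d : ℕ) (hd : 1 ≤ d) (ν : ℝ) (hν : 0 ≤ ν)
    (F G : ℝ → ℝ)
    (hF : ∀ t, HasDerivAt F (-(F t) ^ 2 - G t - ν * F t) t)
    (hG : ∀ t, HasDerivAt G (F t - (d : ℝ) * F t * G t) t) :
    (∀ t : ℝ,
      (1 - (d : ℝ) * G t) * Real.exp ((d : ℝ) * ∫ s in (0:ℝ)..t, F s)
        = 1 - (d : ℝ) * G 0) ∧
    (∀ t : ℝ, Real.sign (1 - (d : ℝ) * G t) = Real.sign (1 - (d : ℝ) * G 0)) := by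
  have hFc : Continuous F := by
    rw [continuous_iff_continuousAt]; exact fun t => (hF t).continuousAt
  have hI : ∀ t : ℝ, HasDerivAt (fun t => ∫ s in (0:ℝ)..t, F s) (F t) t := by
    intro t
    exact intervalIntegral.integral_hasDerivAt_right (hFc.intervalIntegrable 0 t)
      (hFc.stronglyMeasurableAtFilter _ _) hFc.continuousAt
  set H : ℝ → ℝ := fun t =>
    (1 - (d : ℝ) * G t) * Real.exp ((d : ℝ) * ∫ s in (0:ℝ)..t, F s) with hHdef
  have hH : ∀ t : ℝ, HasDerivAt H 0 t := by
    intro t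
    have h1 : HasDerivAt (fun t => 1 - (d : ℝ) * G t)
        (-((d : ℝ) * (F t - (d : ℝ) * F t * G t))) t := by
      simpa using (((hG t).const_mul (d : ℝ)).const_sub 1)
    have h2 : HasDerivAt (fun t => Real.exp ((d : ℝ) * ∫ s in (0:ℝ)..t, F s))
        (Real.exp ((d : ℝ) * ∫ s in (0:ℝ)..t, F s) * ((d : ℝ) * F t)) t :=
      (((hI t).const_mul (d : ℝ))).exp
    have : HasDerivAt H _ t := h1.mul h2
    convert this using 1
    ring
  have hconst : ∀ t : ℝ, H t = H 0 :=
    fun t => is_const_of_deriv_eq_zero (fun x => (hH x).differentiableAt)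
      (fun x => (hH x).deriv) t 0
  have hH0 : H 0 = 1 - (d : ℝ) * G 0 := by
    simp [hHdef]
  have key : ∀ t : ℝ,
      (1 - (d : ℝ) * G t) * Real.exp ((d : ℝ) * ∫ s in (0:ℝ)..t, F s)
        = 1 - (d : ℝ) * G 0 := fun t => (hconst t).trans hH0
  refine ⟨key, fun t => ?_⟩
  have hE : (0:ℝ) < Real.exp ((d : ℝ) * ∫ s in (0:ℝ)..t, F s) := Real.exp_pos _
  have ht : 1 - (d : ℝ) * G t =
      (1 - (d : ℝ) * G 0) / Real.exp ((d : ℝ) * ∫ s in (0:ℝ)..t, F s) := by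
    field_simp [← key t]
    exact key t
  rw [ht]
  rcases lt_trichotomy (1 - (d : ℝ) * G 0) 0 with h | h | h
  · rw [Real.sign_of_neg h, Real.sign_of_neg (div_neg_of_neg_of_pos h hE)]
  · rw [h]; simp
  · rw [Real.sign_of_pos h, Real.sign_of_pos (div_pos h hE)]
end

section
/- Let d ≥ 1, d ≠ 2, and define Φ(G,F) = ((d-2)F² - 2G + 1)/((d-2)(1 - dG)^{2/d}) on the half-plane G < 1/d. If (F,G) solves F' = -F² - G, G' = F - dFG (the frictionless system, ν = 0) with G(t) < 1/d for all t, then Φ(G(t), F(t)) is constant in t. -/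
/-- For `d ≥ 1`, `d ≠ 2`, the function
`Φ(G,F) = ((d-2)F² - 2G + 1)/((d-2)(1-dG)^{2/d})` is a first integral of the
frictionless system `F' = -F² - G`, `G' = F - dFG` on the half-plane `G < 1/d`. -/
theorem stmt4 (d : ℕ) (hd : 1 ≤ d) (hd2 : d ≠ 2)
    (F G : ℝ → ℝ)
    (hF : ∀ t, HasDerivAt F (-(F t) ^ 2 - G t) t)
    (hG : ∀ t, HasDerivAt G (F t - (d : ℝ) * F t * G t) t)
    (hhalf : ∀ t, G t < 1 / d) :
    ∀ t : ℝ,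
      (((d : ℝ) - 2) * (F t) ^ 2 - 2 * G t + 1)
          / (((d : ℝ) - 2) * (1 - (d : ℝ) * G t) ^ ((2 : ℝ) / d))
        = (((d : ℝ) - 2) * (F 0) ^ 2 - 2 * G 0 + 1)
          / (((d : ℝ) - 2) * (1 - (d : ℝ) * G 0) ^ ((2 : ℝ) / d)) := by
  have hd0 : (0 : ℝ) < d := by exact_mod_cast hd
  have hdne : (d : ℝ) ≠ 0 := ne_of_gt hd0
  have hd2' : (d : ℝ) - 2 ≠ 0 := by
    intro h
    apply hd2
    have : (d : ℝ) = 2 := by linarith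
    exact_mod_cast this
  have hu : ∀ t, (0 : ℝ) < 1 - d * G t := by
    intro t
    have h1 : (d : ℝ) * G t < d * (1 / d) := by
      exact mul_lt_mul_of_pos_left (hhalf t) hd0
    have h2 : (d : ℝ) * (1 / d) = 1 := by field_simp
    linarith
  set φ : ℝ → ℝ := fun t =>
    (((d : ℝ) - 2) * (F t) ^ 2 - 2 * G t + 1)
      / (((d : ℝ) - 2) * (1 - (d : ℝ) * G t) ^ ((2 : ℝ) / d)) with hφ
  have key : ∀ t, HasDerivAt φ 0 t := by
    intro t
    have hN : HasDerivAt (fun t => ((d : ℝ) - 2) * (F t) ^ 2 - 2 * G t + 1)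
        (((d : ℝ) - 2) * ((2 : ℕ) * F t ^ 1 * (-(F t) ^ 2 - G t))
          - 2 * (F t - (d : ℝ) * F t * G t)) t := by
      exact ((((hF t).pow 2).const_mul _).sub ((hG t).const_mul 2)).add_const 1
    have hU : HasDerivAt (fun t => 1 - (d : ℝ) * G t)
        (-((d : ℝ) * (F t - (d : ℝ) * F t * G t))) t :=
      ((hG t).const_mul _).const_sub 1
    have hP : HasDerivAt (fun t => (1 - (d : ℝ) * G t) ^ ((2 : ℝ) / d))
        (-((d : ℝ) * (F t - (d : ℝ) * F t * G t)) * ((2 : ℝ) / d)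
          * (1 - (d : ℝ) * G t) ^ ((2 : ℝ) / d - 1)) t :=
      hU.rpow_const (Or.inl (hu t).ne')
    have hD : HasDerivAt (fun t => ((d : ℝ) - 2) * (1 - (d : ℝ) * G t) ^ ((2 : ℝ) / d))
        (((d : ℝ) - 2) * (-((d : ℝ) * (F t - (d : ℝ) * F t * G t)) * ((2 : ℝ) / d)
          * (1 - (d : ℝ) * G t) ^ ((2 : ℝ) / d - 1))) t := hP.const_mul _
    have hDne : ((d : ℝ) - 2) * (1 - (d : ℝ) * G t) ^ ((2 : ℝ) / d) ≠ 0 :=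
      mul_ne_zero hd2' (ne_of_gt (Real.rpow_pos_of_pos (hu t) _))
    have := hN.div hD hDne
    convert this using 1
    case e'_4 => rfl
    case e'_5 => rfl
    case e'_8 => rfl
    have hsplit : (1 - (d : ℝ) * G t) ^ ((2 : ℝ) / d)
        = (1 - (d : ℝ) * G t) ^ ((2 : ℝ) / d - 1) * (1 - (d : ℝ) * G t) := by
      rw [← Real.rpow_add_one (hu t).ne']
      ring_nf
    set w : ℝ := (1 - (d : ℝ) * G t) ^ ((2 : ℝ) / d - 1) with hw
    rw [hsplit]
    have hwpos : 0 < w := Real.rpow_pos_of_pos (hu t) _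
    rw [eq_comm, div_eq_zero_iff]
    left
    field_simp
    ring
  have hdiff : Differentiable ℝ φ := fun t => (key t).differentiableAt
  have hderiv : ∀ t, deriv φ t = 0 := fun t => (key t).deriv
  intro t
  exact is_const_of_deriv_eq_zero hdiff hderiv t 0
end

section
/- Define Φ(G,F) = (2F² + (1-2G)·ln(1-2G) + 1)/(2(1-2G)) on the half-plane G < 1/2. If (F,G) solves F' = -F² - G, G' = F - 2FG with G(t) < 1/2 for all t, then Φ(G(t), F(t)) is constant in t. -/
/-- `Φ(G,F) = (2F² + (1-2G)ln(1-2G) + 1)/(2(1-2G))` is a first integral of the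
frictionless system `F' = -F² - G`, `G' = F - 2FG` on the half-plane `G < 1/2`. -/
theorem stmt5 (F G : ℝ → ℝ)
    (hF : ∀ t, HasDerivAt F (-(F t) ^ 2 - G t) t)
    (hG : ∀ t, HasDerivAt G (F t - 2 * F t * G t) t)
    (hhalf : ∀ t, G t < 1 / 2) :
    ∀ t : ℝ,
      (2 * (F t) ^ 2 + (1 - 2 * G t) * Real.log (1 - 2 * G t) + 1)
          / (2 * (1 - 2 * G t))
        = (2 * (F 0) ^ 2 + (1 - 2 * G 0) * Real.log (1 - 2 * G 0) + 1)
          / (2 * (1 - 2 * G 0)) := by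
  set φ : ℝ → ℝ := fun t =>
    (2 * (F t) ^ 2 + (1 - 2 * G t) * Real.log (1 - 2 * G t) + 1)
      / (2 * (1 - 2 * G t)) with hφ
  have hu : ∀ t, (0:ℝ) < 1 - 2 * G t := by
    intro t; have := hhalf t; linarith
  have key : ∀ t, HasDerivAt φ 0 t := by
    intro t
    have hupos := hu t
    have hune : (1 - 2 * G t) ≠ 0 := ne_of_gt hupos
    have hu' : HasDerivAt (fun t => 1 - 2 * G t) (-2 * (F t - 2 * F t * G t)) t := by
      simpa using ((hG t).const_mul (2:ℝ)).const_sub 1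
    have hlog : HasDerivAt (fun t => Real.log (1 - 2 * G t))
        ((-2 * (F t - 2 * F t * G t)) / (1 - 2 * G t)) t := by
      simpa [Function.comp_def, div_eq_inv_mul] using (Real.hasDerivAt_log hune).comp t hu'
    have hF2 : HasDerivAt (fun t => 2 * (F t) ^ 2)
        (2 * (2 * F t * (-(F t) ^ 2 - G t))) t := by
      have := ((hF t).pow 2).const_mul (2:ℝ)
      simpa [mul_comm, mul_assoc, mul_left_comm] using this
    have hnum : HasDerivAt (fun t => 2 * (F t) ^ 2 + (1 - 2 * G t) * Real.log (1 - 2 * G t) + 1)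
        (2 * (2 * F t * (-(F t) ^ 2 - G t)) +
          ((-2 * (F t - 2 * F t * G t)) * Real.log (1 - 2 * G t) +
            (1 - 2 * G t) * ((-2 * (F t - 2 * F t * G t)) / (1 - 2 * G t)))) t := by
      exact (hF2.add (hu'.mul hlog)).add_const 1
    have hden : HasDerivAt (fun t => 2 * (1 - 2 * G t)) (2 * (-2 * (F t - 2 * F t * G t))) t :=
      hu'.const_mul 2
    have hdiv := hnum.div hden (by positivity)
    refine HasDerivAt.congr_deriv hdiv ?_
    field_simp
    ring
  have hconst : ∀ t, φ t = φ 0 := by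
    intro t
    have : Differentiable ℝ φ := fun x => (key x).differentiableAt
    exact is_const_of_deriv_eq_zero this (fun x => (key x).deriv) t 0
  exact hconst
end

section
/- Let d ≥ 1, d ≠ 2, ν ≥ 0, and let (F,G) solve F' = -F² - G - νF, G' = F - dFG with G(t) < 1/d. Set V(t) = ((d-2)F(t)² - 2G(t) + 1)/((d-2)(1 - dG(t))^{2/d}). Then V'(t) = -2νF(t)²/(1 - dG(t))^{2/d}. In particular V is nonincreasing when ν ≥ 0. -/
/-- Along the frictional flow `F' = -F²-G-νF`, `G' = F-dFG` with `G < 1/d`, the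
frictionless first integral `V(t) = ((d-2)F²-2G+1)/((d-2)(1-dG)^{2/d})`
satisfies `V' = -2νF²/(1-dG)^{2/d}`; in particular `V` is nonincreasing. -/
theorem stmt6 (d : ℕ) (hd : 1 ≤ d) (hd2 : d ≠ 2) (ν : ℝ) (hν : 0 ≤ ν)
    (F G : ℝ → ℝ)
    (hF : ∀ t, HasDerivAt F (-(F t) ^ 2 - G t - ν * F t) t)
    (hG : ∀ t, HasDerivAt G (F t - (d : ℝ) * F t * G t) t)
    (hhalf : ∀ t, G t < 1 / d)
    (V : ℝ → ℝ)
    (hV : ∀ t, V t = (((d : ℝ) - 2) * (F t) ^ 2 - 2 * G t + 1)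
          / (((d : ℝ) - 2) * (1 - (d : ℝ) * G t) ^ ((2 : ℝ) / d))) :
    (∀ t, HasDerivAt V
        (-2 * ν * (F t) ^ 2 / (1 - (d : ℝ) * G t) ^ ((2 : ℝ) / d)) t) ∧
    (∀ s t : ℝ, s ≤ t → V t ≤ V s) := by
  have hdpos : (0:ℝ) < d := by exact_mod_cast hd
  have hd0 : (d:ℝ) ≠ 0 := hdpos.ne'
  have hdm2 : (d:ℝ) - 2 ≠ 0 := by
    have h2 : (d:ℝ) ≠ 2 := by exact_mod_cast hd2
    intro h; exact h2 (by linarith)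
  have hP : ∀ t, 0 < 1 - (d:ℝ) * G t := by
    intro t
    have h := hhalf t
    have := mul_lt_mul_of_pos_left h hdpos
    rw [mul_one_div, div_self hd0] at this
    linarith
  have key : ∀ t, HasDerivAt V
      (-2 * ν * (F t) ^ 2 / (1 - (d : ℝ) * G t) ^ ((2 : ℝ) / d)) t := by
    intro t
    have hVeq : V = fun u => (((d : ℝ) - 2) * (F u) ^ 2 - 2 * G u + 1)
          / (((d : ℝ) - 2) * (1 - (d : ℝ) * G u) ^ ((2 : ℝ) / d)) := funext hV
    have hPder : HasDerivAt (fun u => 1 - (d:ℝ) * G u)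
        (-((d:ℝ) * (F t - (d:ℝ) * F t * G t))) t := by
      simpa using ((hG t).const_mul (d:ℝ)).const_sub 1
    have hpow : HasDerivAt (fun u => (1 - (d:ℝ) * G u) ^ ((2:ℝ)/d))
        ((-((d:ℝ) * (F t - (d:ℝ) * F t * G t))) * ((2:ℝ)/d)
          * (1 - (d:ℝ) * G t) ^ ((2:ℝ)/d - 1)) t :=
      hPder.rpow_const (Or.inl (hP t).ne')
    have hNum : HasDerivAt (fun u => ((d:ℝ) - 2) * (F u) ^ 2 - 2 * G u + 1)
        (((d:ℝ) - 2) * ((2:ℕ) * (F t) ^ 1 * (-(F t) ^ 2 - G t - ν * F t))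
          - 2 * (F t - (d:ℝ) * F t * G t)) t := by
      simpa using ((((hF t).pow 2).const_mul ((d:ℝ) - 2)).sub
        ((hG t).const_mul 2)).add_const 1
    have hDen : HasDerivAt (fun u => ((d:ℝ) - 2) * (1 - (d:ℝ) * G u) ^ ((2:ℝ)/d))
        (((d:ℝ) - 2) * ((-((d:ℝ) * (F t - (d:ℝ) * F t * G t))) * ((2:ℝ)/d)
          * (1 - (d:ℝ) * G t) ^ ((2:ℝ)/d - 1))) t :=
      hpow.const_mul _
    have hA : (0:ℝ) < (1 - (d:ℝ) * G t) ^ ((2:ℝ)/d) :=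
      Real.rpow_pos_of_pos (hP t) _
    have hDne : ((d:ℝ) - 2) * (1 - (d:ℝ) * G t) ^ ((2:ℝ)/d) ≠ 0 :=
      mul_ne_zero hdm2 hA.ne'
    have hdiv := hNum.div hDen hDne
    rw [hVeq]
    refine hdiv.congr_deriv ?_
    have hsub : (1 - (d:ℝ) * G t) ^ ((2:ℝ)/d - 1)
        = (1 - (d:ℝ) * G t) ^ ((2:ℝ)/d) / (1 - (d:ℝ) * G t) := by
      rw [Real.rpow_sub (hP t), Real.rpow_one]
    rw [hsub]
    have hPne : (1 - (d:ℝ) * G t) ≠ 0 := (hP t).ne'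
    field_simp
    ring
  refine ⟨key, fun s t hst => ?_⟩
  have hanti : Antitone V := by
    apply antitone_of_deriv_nonpos (fun x => (key x).differentiableAt)
    intro x
    rw [(key x).deriv]
    apply div_nonpos_of_nonpos_of_nonneg
    · nlinarith [sq_nonneg (F x)]
    · exact Real.rpow_nonneg (hP x).le _
  exact hanti hst
end

section
/- Let d ≥ 1 and ν > 0. The system F' = -F² - G - νF, G' = F - dFG has no periodic orbit (closed trajectory of positive period) contained in the half-plane {(G,F) : G < 1/d}. -/
open Set Real intervalIntegral

set_option maxHeartbeats 1000000

/-- Gronwall-type uniqueness helper: a nonnegative differentiable function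
vanishing at `0` whose derivative is locally dominated by `K * f` vanishes
for all nonnegative times. -/
lemma stmt7_gron (f f' : ℝ → ℝ) (hdf : ∀ x, HasDerivAt f (f' x) x)
    (h0 : f 0 = 0) (hnn : ∀ x, 0 ≤ f x)
    (hb : ∀ b, 0 < b → ∃ K, ∀ x ∈ Set.Icc (0:ℝ) b, |f' x| ≤ K * f x) :
    ∀ t, 0 ≤ t → f t = 0 := by
  intro t ht
  rcases eq_or_lt_of_le ht with h | h
  · rw [← h, h0]
  obtain ⟨K, hK⟩ := hb t h
  have hcont : ContinuousOn f (Set.Icc 0 t) :=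
    fun x _ => ((hdf x).continuousAt).continuousWithinAt
  have hder : ∀ x ∈ Set.Ico (0:ℝ) t, HasDerivWithinAt f (f' x) (Set.Ici x) x :=
    fun x _ => (hdf x).hasDerivWithinAt
  have hbound : ∀ x ∈ Set.Ico (0:ℝ) t, ‖f' x‖ ≤ K * ‖f x‖ + 0 := by
    intro x hx
    rw [Real.norm_eq_abs, Real.norm_eq_abs, abs_of_nonneg (hnn x), add_zero]
    exact hK x ⟨hx.1, hx.2.le⟩
  have ha : ‖f 0‖ ≤ 0 := by simp [h0]
  have := norm_le_gronwallBound_of_norm_deriv_right_le hcont hder ha hbound t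
    ⟨le_of_lt h, le_refl t⟩
  rw [gronwallBound_ε0_δ0] at this
  have := le_antisymm (by simpa [Real.norm_eq_abs, abs_of_nonneg (hnn t)] using this) (hnn t)
  linarith

/-- For `d ≥ 1` and `ν > 0`, the system `F' = -F²-G-νF`, `G' = F-dFG` has no
periodic orbit contained in the half-plane `G < 1/d`: any solution staying in
this half-plane that returns to its initial point at some positive time is
constant. -/
theorem stmt7 (d : ℕ) (hd : 1 ≤ d) (ν : ℝ) (hν : 0 < ν)
    (F G : ℝ → ℝ)
    (hF : ∀ t, HasDerivAt F (-(F t) ^ 2 - G t - ν * F t) t)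
    (hG : ∀ t, HasDerivAt G (F t - (d : ℝ) * F t * G t) t)
    (hhalf : ∀ t, G t < 1 / d)
    (T : ℝ) (hT : 0 < T) (hper : F T = F 0 ∧ G T = G 0) :
    ∀ t : ℝ, F t = F 0 ∧ G t = G 0 := by
  have hd0 : (0:ℝ) < d := by exact_mod_cast Nat.lt_of_lt_of_le Nat.zero_lt_one hd
  have hd0' : (d:ℝ) ≠ 0 := ne_of_gt hd0
  have h1d : (0:ℝ) < 1 / d := by positivity
  set c : ℝ := -2 / d with hc
  -- positivity of 1 - d G
  have hkey : ∀ s : ℝ, s < 1/(d:ℝ) → 0 < 1 - (d:ℝ) * s := by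
    intro s hs
    have h2 : (d:ℝ) * s < (d:ℝ) * (1/d) := (mul_lt_mul_iff_right₀ hd0).mpr hs
    rw [mul_one_div, div_self hd0'] at h2
    linarith
  have hu : ∀ t, 0 < 1 - (d:ℝ) * G t := fun t => hkey _ (hhalf t)
  -- the auxiliary integrand
  set φ : ℝ → ℝ := fun s => 2 * s * (1 - (d:ℝ) * s) ^ (c - 1) with hφ
  have hφcont : ∀ s ∈ Set.Iio (1/(d:ℝ)), ContinuousAt φ s := by
    intro s hs
    have hpos : (0:ℝ) < 1 - d * s := hkey s hs
    have h1 : ContinuousAt (fun s : ℝ => (1 - (d:ℝ) * s)) s :=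
      (continuousAt_const.sub (continuousAt_const.mul continuousAt_id))
    have h3 : ContinuousAt (fun s : ℝ => (1 - (d:ℝ) * s) ^ (c - 1)) s :=
      h1.rpow_const (Or.inl (ne_of_gt hpos))
    exact (continuousAt_const.mul continuousAt_id).mul h3
  have hφcontOn : ContinuousOn φ (Set.Iio (1/(d:ℝ))) :=
    fun s hs => (hφcont s hs).continuousWithinAt
  -- the Lyapunov function
  set Φ : ℝ → ℝ := fun t => (1 - (d:ℝ) * G t) ^ c * (F t) ^ 2 +
      ∫ s in (0:ℝ)..(G t), φ s with hΦdef
  -- derivative of Φ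
  have hΦ : ∀ t, HasDerivAt Φ (-(2 * ν * (F t) ^ 2 * (1 - (d:ℝ) * G t) ^ c)) t := by
    intro t
    have hut := hu t
    -- derivative of u ↦ u^c part
    have hu' : HasDerivAt (fun x => 1 - (d:ℝ) * G x)
        (0 - (d:ℝ) * (F t - (d:ℝ) * F t * G t)) t :=
      (hasDerivAt_const t (1:ℝ)).sub ((hG t).const_mul _)
    have hA : HasDerivAt (fun x => (1 - (d:ℝ) * G x) ^ c)
        ((0 - (d:ℝ) * (F t - (d:ℝ) * F t * G t)) * c * (1 - (d:ℝ) * G t) ^ (c - 1)) t :=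
      hu'.rpow_const (Or.inl (ne_of_gt hut))
    have hF2 : HasDerivAt (fun x => (F x) ^ 2)
        (2 * F t ^ 1 * (-(F t) ^ 2 - G t - ν * F t)) t := by
      simpa using (hF t).fun_pow 2
    have hAF : HasDerivAt (fun x => (1 - (d:ℝ) * G x) ^ c * (F x) ^ 2)
        ((0 - (d:ℝ) * (F t - (d:ℝ) * F t * G t)) * c * (1 - (d:ℝ) * G t) ^ (c - 1) * (F t) ^ 2
          + (1 - (d:ℝ) * G t) ^ c * (2 * F t ^ 1 * (-(F t) ^ 2 - G t - ν * F t))) t :=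
      hA.mul hF2
    -- derivative of the integral part
    have hsub : Set.uIcc (0:ℝ) (G t) ⊆ Set.Iio (1/(d:ℝ)) := by
      intro x hx
      exact lt_of_le_of_lt hx.2 (sup_lt_iff.mpr ⟨h1d, hhalf t⟩)
    have hint : IntervalIntegrable φ MeasureTheory.volume 0 (G t) :=
      (hφcontOn.mono hsub).intervalIntegrable
    have hmeas : StronglyMeasurableAtFilter φ (nhds (G t)) MeasureTheory.volume :=
      hφcontOn.stronglyMeasurableAtFilter isOpen_Iio (G t) (hhalf t)
    have hχ : HasDerivAt (fun g : ℝ => ∫ s in (0:ℝ)..g, φ s) (φ (G t)) (G t) :=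
      intervalIntegral.integral_hasDerivAt_right hint hmeas (hφcont (G t) (hhalf t))
    have hB : HasDerivAt (fun x => ∫ s in (0:ℝ)..(G x), φ s)
        (φ (G t) * (F t - (d:ℝ) * F t * G t)) t :=
      hχ.comp t (hG t)
    have := hAF.add hB
    refine this.congr_deriv ?_
    symm
    -- algebraic identity
    have hrw : (1 - (d:ℝ) * G t) ^ c = (1 - (d:ℝ) * G t) ^ (c - 1) * (1 - (d:ℝ) * G t) := by
      rw [← Real.rpow_add_one (ne_of_gt hut)]
      ring_nf
    have hcd : c * (d:ℝ) = -2 := by rw [hc]; field_simp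
    simp only [hφ]
    rw [hrw]
    linear_combination ((1 - (d:ℝ) * G t) ^ (c - 1) * (F t) ^ 3 * (1 - (d:ℝ) * G t)) * hcd
  -- Φ is antitone
  have hΦanti : Antitone Φ := by
    apply antitone_of_deriv_nonpos (fun t => (hΦ t).differentiableAt)
    intro t
    rw [(hΦ t).deriv]
    have hupos := Real.rpow_pos_of_pos (hu t) c
    have hnn : 0 ≤ 2 * ν * F t ^ 2 * (1 - (d:ℝ) * G t) ^ c :=
      mul_nonneg (mul_nonneg (by linarith) (sq_nonneg _)) hupos.le
    linarith
  have hΦper : Φ T = Φ 0 := by simp only [hΦdef, hper.1, hper.2]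
  have hconst : ∀ s ∈ Set.Icc (0:ℝ) T, Φ s = Φ 0 := fun s hs =>
    le_antisymm (hΦanti hs.1) (hΦper ▸ hΦanti hs.2)
  -- F vanishes on the open interval
  have hFzero : ∀ s ∈ Set.Ioo (0:ℝ) T, F s = 0 := by
    intro s hs
    have hev : Φ =ᶠ[nhds s] fun _ => Φ 0 := by
      filter_upwards [Ioo_mem_nhds hs.1 hs.2] with x hx
      exact hconst x ⟨hx.1.le, hx.2.le⟩
    have h0 : HasDerivAt Φ 0 s := (hasDerivAt_const s (Φ 0)).congr_of_eventuallyEq hev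
    have huniq := (hΦ s).unique h0
    have hupos := Real.rpow_pos_of_pos (hu s) c
    have hsq : (F s) ^ 2 = 0 := by
      by_contra h
      have hpos : 0 < (F s) ^ 2 := lt_of_le_of_ne (sq_nonneg _) (Ne.symm h)
      nlinarith [mul_pos (mul_pos (by linarith : (0:ℝ) < 2 * ν) hpos) hupos]
    exact pow_eq_zero_iff (by norm_num : (2:ℕ) ≠ 0) |>.mp hsq
  -- G vanishes on the open interval
  have hGzero : ∀ s ∈ Set.Ioo (0:ℝ) T, G s = 0 := by
    intro s hs
    have hev : F =ᶠ[nhds s] fun _ => 0 := by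
      filter_upwards [Ioo_mem_nhds hs.1 hs.2] with x hx
      exact hFzero x hx
    have h0 : HasDerivAt F 0 s := (hasDerivAt_const s (0:ℝ)).congr_of_eventuallyEq hev
    have huniq := (hF s).unique h0
    have hFs := hFzero s hs
    rw [hFs] at huniq
    linarith [huniq]
  have hFc : Continuous F :=
    (Differentiable.continuous (fun t => (hF t).differentiableAt))
  have hGc : Continuous G :=
    (Differentiable.continuous (fun t => (hG t).differentiableAt))
  -- values at the endpoint 0 by continuity
  have hclos : closure (Set.Ioo (0:ℝ) T) = Set.Icc 0 T := closure_Ioo hT.ne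
  have hF0 : F 0 = 0 := by
    have heq : Set.EqOn F (fun _ => 0) (Set.Ioo (0:ℝ) T) := fun x hx => hFzero x hx
    have := heq.closure hFc continuous_const
    rw [hclos] at this
    exact this ⟨le_refl 0, hT.le⟩
  have hG0 : G 0 = 0 := by
    have heq : Set.EqOn G (fun _ => 0) (Set.Ioo (0:ℝ) T) := fun x hx => hGzero x hx
    have := heq.closure hGc continuous_const
    rw [hclos] at this
    exact this ⟨le_refl 0, hT.le⟩
  -- Gronwall: the solution stays at the rest point
  set r : ℝ → ℝ := fun x => (F x) ^ 2 + (G x) ^ 2 with hrdef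
  set r' : ℝ → ℝ := fun x =>
      2 * F x * (-(F x) ^ 2 - G x - ν * F x) + 2 * G x * (F x - (d:ℝ) * F x * G x) with hr'def
  have hr : ∀ x, HasDerivAt r (r' x) x := by
    intro x
    have h1 : HasDerivAt (fun y => (F y) ^ 2)
        (2 * F x ^ 1 * (-(F x) ^ 2 - G x - ν * F x)) x := by simpa using (hF x).fun_pow 2
    have h2 : HasDerivAt (fun y => (G y) ^ 2)
        (2 * G x ^ 1 * (F x - (d:ℝ) * F x * G x)) x := by simpa using (hG x).fun_pow 2
    have := h1.add h2
    simp only [pow_one] at this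
    exact this
  have hr0 : r 0 = 0 := by simp [hrdef, hF0, hG0]
  have hrnn : ∀ x, 0 ≤ r x := fun x => by positivity
  have hbnd : ∀ a b : ℝ, ∃ K, ∀ x ∈ Set.Icc a b, |r' x| ≤ K * r x := by
    intro a b
    obtain ⟨C, hC⟩ := (isCompact_Icc (a := a) (b := b)).exists_bound_of_continuousOn
      hFc.continuousOn
    refine ⟨2 * C + 2 * ν + 2 * (d:ℝ) * C, ?_⟩
    intro x hx
    have hM : |F x| ≤ C := by simpa [Real.norm_eq_abs] using hC x hx
    have h1 := (abs_le.mp hM).1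
    have h2 := (abs_le.mp hM).2
    have hC0 : (0:ℝ) ≤ C := le_trans (abs_nonneg _) hM
    simp only [hrdef, hr'def]
    rw [abs_le]
    constructor
    · nlinarith [sq_nonneg (F x), sq_nonneg (G x),
        mul_nonneg (by linarith : (0:ℝ) ≤ C - F x) (sq_nonneg (F x)),
        mul_nonneg (by linarith : (0:ℝ) ≤ C - F x) (sq_nonneg (G x)),
        mul_nonneg hν.le (sq_nonneg (G x)), mul_nonneg hν.le (sq_nonneg (F x)),
        mul_nonneg (mul_nonneg hd0.le (by linarith : (0:ℝ) ≤ C - F x)) (sq_nonneg (G x)),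
        mul_nonneg (mul_nonneg hd0.le hC0) (sq_nonneg (F x)),
        mul_nonneg (mul_nonneg hd0.le hC0) (sq_nonneg (G x)),
        mul_nonneg hC0 (sq_nonneg (F x)), mul_nonneg hC0 (sq_nonneg (G x))]
    · nlinarith [sq_nonneg (F x), sq_nonneg (G x),
        mul_nonneg (by linarith : (0:ℝ) ≤ C + F x) (sq_nonneg (F x)),
        mul_nonneg (by linarith : (0:ℝ) ≤ C + F x) (sq_nonneg (G x)),
        mul_nonneg hν.le (sq_nonneg (G x)), mul_nonneg hν.le (sq_nonneg (F x)),
        mul_nonneg (mul_nonneg hd0.le (by linarith : (0:ℝ) ≤ C + F x)) (sq_nonneg (G x)),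
        mul_nonneg (mul_nonneg hd0.le hC0) (sq_nonneg (F x)),
        mul_nonneg (mul_nonneg hd0.le hC0) (sq_nonneg (G x)),
        mul_nonneg hC0 (sq_nonneg (F x)), mul_nonneg hC0 (sq_nonneg (G x))]
  have hrzero : ∀ x, r x = 0 := by
    intro x
    rcases le_total 0 x with hx | hx
    · exact stmt7_gron r r' hr hr0 hrnn (fun b _ => hbnd 0 b) x hx
    · -- time reversal
      set q : ℝ → ℝ := fun y => r (-y) with hqdef
      set q' : ℝ → ℝ := fun y => r' (-y) * (-1) with hq'def
      have hq : ∀ y, HasDerivAt q (q' y) y := fun y =>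
        (hr (-y)).comp y (hasDerivAt_neg y)
      have hq0 : q 0 = 0 := by simp [hqdef, hr0]
      have hqnn : ∀ y, 0 ≤ q y := fun y => hrnn (-y)
      have hqb : ∀ b, 0 < b → ∃ K, ∀ y ∈ Set.Icc (0:ℝ) b, |q' y| ≤ K * q y := by
        intro b _
        obtain ⟨K, hK⟩ := hbnd (-b) 0
        refine ⟨K, fun y hy => ?_⟩
        have : -y ∈ Set.Icc (-b) (0:ℝ) := ⟨by linarith [hy.2], by linarith [hy.1]⟩
        simpa [hq'def, hqdef, abs_mul] using hK (-y) this
      have := stmt7_gron q q' hq hq0 hqnn hqb (-x) (by linarith)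
      simpa [hqdef] using this
  intro t
  rw [hF0, hG0]
  have hrt := hrzero t
  simp only [hrdef] at hrt
  have hF2 : (F t) ^ 2 = 0 := by nlinarith [sq_nonneg (F t), sq_nonneg (G t)]
  have hG2 : (G t) ^ 2 = 0 := by nlinarith [sq_nonneg (F t), sq_nonneg (G t)]
  exact ⟨pow_eq_zero_iff (by norm_num : (2:ℕ) ≠ 0) |>.mp hF2,
    pow_eq_zero_iff (by norm_num : (2:ℕ) ≠ 0) |>.mp hG2⟩
end

section
/- Let d ≥ 1, ν ≥ 0, and let (F, G, u, v) solve the system F' = -F² - G - νF, G' = F - dFG, u' = -u² - 2uF - v - νu, v' = -uv + (1-dG)u - dFv. Let (Q, p₁, p₂) solve the linear system Q' = p₁, p₁' = -(2F+ν)p₁ - p₂, p₂' = (1-dG)p₁ - dF·p₂ with Q(0) = 1, p₁(0) = u(0), p₂(0) = v(0). Then on any interval containing 0 on which Q does not vanish, u = p₁/Q and v = p₂/Q. -/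
set_option maxHeartbeats 1000000
open Set

/-- A curve in `ℝ × ℝ` whose derivative norm is linearly controlled by its norm
and which vanishes at `0` vanishes on `[0, ∞)`. -/
lemma key_nonneg (f f' : ℝ → ℝ × ℝ) (hf : ∀ t, HasDerivAt f (f' t) t)
    (M : ℝ → ℝ) (hM : Continuous M)
    (hb : ∀ t, ‖f' t‖ ≤ M t * ‖f t‖) (h0 : f 0 = 0) :
    ∀ t, 0 ≤ t → f t = 0 := by
  intro t ht
  obtain ⟨s, hs, hK⟩ := (isCompact_Icc (a := (0:ℝ)) (b := t)).exists_isMaxOn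
    (nonempty_Icc.2 ht) hM.continuousOn
  set K := M s with hKdef
  have hbound : ∀ x ∈ Icc (0:ℝ) t, ‖f x‖ ≤ gronwallBound 0 K 0 (x - 0) := by
    apply norm_le_gronwallBound_of_norm_deriv_right_le
      (fun x _ => ((hf x).continuousAt.continuousWithinAt))
      (fun x _ => (hf x).hasDerivWithinAt)
      (by simp [h0])
      (fun x hx => by
        rw [add_zero]
        exact (hb x).trans (mul_le_mul_of_nonneg_right (hK (Ico_subset_Icc_self hx))
          (norm_nonneg _)))
  have := hbound t (right_mem_Icc.2 ht)
  rw [gronwallBound_ε0] at this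
  have hle : ‖f t‖ ≤ 0 := by simpa using this
  exact norm_le_zero_iff.mp hle

lemma key (f f' : ℝ → ℝ × ℝ) (hf : ∀ t, HasDerivAt f (f' t) t)
    (M : ℝ → ℝ) (hM : Continuous M)
    (hb : ∀ t, ‖f' t‖ ≤ M t * ‖f t‖) (h0 : f 0 = 0) :
    ∀ t, f t = 0 := by
  intro t
  rcases le_total 0 t with ht | ht
  · exact key_nonneg f f' hf M hM hb h0 t ht
  · have hg : ∀ s, HasDerivAt (f ∘ (fun x : ℝ => -x)) ((-1 : ℝ) • f' (-s)) s :=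
      fun s => (hf (-s)).scomp s (hasDerivAt_neg s)
    have := key_nonneg (f ∘ (fun x : ℝ => -x)) (fun s => (-1 : ℝ) • f' (-s)) hg
      (fun s => M (-s)) (hM.comp continuous_neg)
      (fun s => by simpa using hb (-s)) (by simpa using h0) (-t) (by linarith)
    simpa using this

/-- Radon-lemma linearization: if `(F,G,u,v)` solves the Riccati system and
`(Q,p₁,p₂)` solves the associated linear system with `Q(0)=1`, `p₁(0)=u(0)`,
`p₂(0)=v(0)`, then on any interval containing `0` on which `Q` does not vanish
one has `u = p₁/Q` and `v = p₂/Q`. -/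
theorem stmt8 (d : ℕ) (hd : 1 ≤ d) (ν : ℝ) (hν : 0 ≤ ν)
    (F G u v Q p₁ p₂ : ℝ → ℝ)
    (hF : ∀ t, HasDerivAt F (-(F t) ^ 2 - G t - ν * F t) t)
    (hG : ∀ t, HasDerivAt G (F t - (d : ℝ) * F t * G t) t)
    (hu : ∀ t, HasDerivAt u (-(u t) ^ 2 - 2 * u t * F t - v t - ν * u t) t)
    (hv : ∀ t, HasDerivAt v
      (-(u t) * v t + (1 - (d : ℝ) * G t) * u t - (d : ℝ) * F t * v t) t)
    (hQ : ∀ t, HasDerivAt Q (p₁ t) t)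
    (hp₁ : ∀ t, HasDerivAt p₁ (-(2 * F t + ν) * p₁ t - p₂ t) t)
    (hp₂ : ∀ t, HasDerivAt p₂
      ((1 - (d : ℝ) * G t) * p₁ t - (d : ℝ) * F t * p₂ t) t)
    (hQ0 : Q 0 = 1) (hp₁0 : p₁ 0 = u 0) (hp₂0 : p₂ 0 = v 0)
    (I : Set ℝ) (hI0 : (0 : ℝ) ∈ I) (hIconn : I.OrdConnected)
    (hQne : ∀ t ∈ I, Q t ≠ 0) :
    ∀ t ∈ I, u t = p₁ t / Q t ∧ v t = p₂ t / Q t := by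
  set a : ℝ → ℝ := fun t => Q t * u t - p₁ t with ha_def
  set b : ℝ → ℝ := fun t => Q t * v t - p₂ t with hb_def
  set α : ℝ → ℝ := fun t => -(u t + 2 * F t + ν) with hα_def
  set γ : ℝ → ℝ := fun t => (1 - (d : ℝ) * G t) - v t with hγ_def
  set δ : ℝ → ℝ := fun t => -((d : ℝ) * F t) with hδ_def
  have ha : ∀ t, HasDerivAt a (α t * a t + (-1) * b t) t := by
    intro t
    have h := ((hQ t).mul (hu t)).sub (hp₁ t)
    refine h.congr_deriv ?_
    simp only [ha_def, hb_def, hα_def]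
    ring
  have hb : ∀ t, HasDerivAt b (γ t * a t + δ t * b t) t := by
    intro t
    have h := ((hQ t).mul (hv t)).sub (hp₂ t)
    refine h.congr_deriv ?_
    simp only [ha_def, hb_def, hγ_def, hδ_def]
    ring
  set f : ℝ → ℝ × ℝ := fun t => (a t, b t) with hf_def
  set f' : ℝ → ℝ × ℝ := fun t => (α t * a t + (-1) * b t, γ t * a t + δ t * b t)
  have hf : ∀ t, HasDerivAt f (f' t) t := fun t => (ha t).prodMk (hb t)
  set M : ℝ → ℝ := fun t => (|α t| + 1) + (|γ t| + |δ t|) with hM_def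
  have hMc : Continuous M := by
    have hαc : Continuous α := by
      have := fun t => ((hu t).continuousAt)
      have hu' : Continuous u := continuous_iff_continuousAt.2 this
      have hF' : Continuous F := continuous_iff_continuousAt.2 fun t => (hF t).continuousAt
      continuity
    have hγc : Continuous γ := by
      have hG' : Continuous G := continuous_iff_continuousAt.2 fun t => (hG t).continuousAt
      have hv' : Continuous v := continuous_iff_continuousAt.2 fun t => (hv t).continuousAt
      continuity
    have hδc : Continuous δ := by
      have hF' : Continuous F := continuous_iff_continuousAt.2 fun t => (hF t).continuousAt
      continuity
    exact ((hαc.abs.add continuous_const).add (hγc.abs.add hδc.abs))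
  have hbound : ∀ t, ‖f' t‖ ≤ M t * ‖f t‖ := by
    intro t
    have h1 : |a t| ≤ ‖f t‖ := norm_fst_le (f t)
    have h2 : |b t| ≤ ‖f t‖ := norm_snd_le (f t)
    have hfn : 0 ≤ ‖f t‖ := norm_nonneg _
    have e1 : ‖f' t‖ = max |α t * a t + (-1) * b t| |γ t * a t + δ t * b t| := rfl
    rw [e1]
    apply max_le
    · calc |α t * a t + (-1) * b t| ≤ |α t| * |a t| + 1 * |b t| := by
            refine (abs_add_le _ _).trans ?_
            rw [abs_mul, abs_mul]
            simp
      _ ≤ (|α t| + 1) * ‖f t‖ := by nlinarith [abs_nonneg (α t), abs_nonneg (a t), abs_nonneg (b t)]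
      _ ≤ M t * ‖f t‖ := by
            apply mul_le_mul_of_nonneg_right _ hfn
            simp only [hM_def]
            nlinarith [abs_nonneg (γ t), abs_nonneg (δ t)]
    · calc |γ t * a t + δ t * b t| ≤ |γ t| * |a t| + |δ t| * |b t| := by
            refine (abs_add_le _ _).trans ?_
            rw [abs_mul, abs_mul]
      _ ≤ (|γ t| + |δ t|) * ‖f t‖ := by nlinarith [abs_nonneg (γ t), abs_nonneg (δ t)]
      _ ≤ M t * ‖f t‖ := by
            apply mul_le_mul_of_nonneg_right _ hfn
            simp only [hM_def]
            nlinarith [abs_nonneg (α t)]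
  have h0 : f 0 = 0 := by
    simp only [hf_def, ha_def, hb_def, hQ0, hp₁0, hp₂0]
    norm_num
  have hzero := key f f' hf M hMc hbound h0
  intro t htI
  have hz := hzero t
  have hz1 : Q t * u t = p₁ t := by
    have := congrArg Prod.fst hz; simpa [hf_def, ha_def, sub_eq_zero] using this
  have hz2 : Q t * v t = p₂ t := by
    have := congrArg Prod.snd hz; simpa [hf_def, hb_def, sub_eq_zero] using this
  constructor
  · field_simp [hQne t htI]; linarith [hz1]
  · field_simp [hQne t htI]; linarith [hz2]
end

section
/- Let d ≥ 1, ν ≥ 0, let (F,G) solve F' = -F² - G - νF, G' = F - dFG, and let p₁, p₂ solve p₁' = -(2F+ν)p₁ - p₂, p₂' = (1-dG)p₁ - dF·p₂. Then p₁ satisfies the second-order linear ODE p₁'' + ((d+2)F + ν)p₁' + (2(d-1)F² - (d+2)G + (d-2)νF + 1)p₁ = 0. -/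
/-- The function `p₁` of the linearized system satisfies the second-order ODE
`p₁'' + ((d+2)F + ν)p₁' + (2(d-1)F² - (d+2)G + (d-2)νF + 1)p₁ = 0`. -/
theorem stmt9 (d : ℕ) (hd : 1 ≤ d) (ν : ℝ) (hν : 0 ≤ ν)
    (F G p₁ p₂ : ℝ → ℝ)
    (hF : ∀ t, HasDerivAt F (-(F t) ^ 2 - G t - ν * F t) t)
    (hG : ∀ t, HasDerivAt G (F t - (d : ℝ) * F t * G t) t)
    (hp₁ : ∀ t, HasDerivAt p₁ (-(2 * F t + ν) * p₁ t - p₂ t) t)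
    (hp₂ : ∀ t, HasDerivAt p₂
      ((1 - (d : ℝ) * G t) * p₁ t - (d : ℝ) * F t * p₂ t) t) :
    ∀ t, HasDerivAt (fun s => -(2 * F s + ν) * p₁ s - p₂ s)
      (-(((d : ℝ) + 2) * F t + ν) * (-(2 * F t + ν) * p₁ t - p₂ t)
        - (2 * ((d : ℝ) - 1) * (F t) ^ 2 - ((d : ℝ) + 2) * G t
            + ((d : ℝ) - 2) * ν * F t + 1) * p₁ t) t := by
  intro t
  have h : HasDerivAt (fun s => -(2 * F s + ν) * p₁ s - p₂ s) _ t := (((hF t).const_mul 2).add_const ν |>.neg.mul (hp₁ t)).sub (hp₂ t)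
  convert h using 1
  simp only [Pi.neg_apply]
  ring
end

section
/- Let J₊ > 0 be a constant and let J : [0,∞) → ℝ be continuous with J(t) ≤ J₊ for all t. Let H solve H'' + J(t)H = 0 with H(0) ≤ 0 and H'(0) < 0. Then for all t in the interval [0, t*] on which H·H' ≥ 0, one has H(t)² + H'(t)²/J₊ ≥ H(0)² + H'(0)²/J₊; hence at any time t* where H attains a negative minimum, H(t*)² ≥ H(0)² + H'(0)²/J₊. -/
/-- If `H'' + J(t)H = 0` with `J ≤ J₊`, `H(0) ≤ 0`, `H'(0) < 0`, then as long
as `H·H' ≥ 0` on `[0,t]` one has `H(t)² + H'(t)²/J₊ ≥ H(0)² + H'(0)²/J₊`;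
hence at a time `t*` where `H` attains a negative minimum,
`H(t*)² ≥ H(0)² + H'(0)²/J₊`. -/
theorem stmt12 (Jp : ℝ) (hJp : 0 < Jp) (J H H' : ℝ → ℝ)
    (hJc : ContinuousOn J (Set.Ici (0 : ℝ)))
    (hJle : ∀ t ≥ (0 : ℝ), J t ≤ Jp)
    (hH : ∀ t ≥ (0 : ℝ), HasDerivAt H (H' t) t)
    (hH' : ∀ t ≥ (0 : ℝ), HasDerivAt H' (-(J t) * H t) t)
    (hH0 : H 0 ≤ 0) (hH'0 : H' 0 < 0) :
    (∀ t ≥ (0 : ℝ), (∀ s ∈ Set.Icc (0 : ℝ) t, H s * H' s ≥ 0) →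
      (H t) ^ 2 + (H' t) ^ 2 / Jp ≥ (H 0) ^ 2 + (H' 0) ^ 2 / Jp) ∧
    (∀ tstar ≥ (0 : ℝ), (∀ s ∈ Set.Icc (0 : ℝ) tstar, H s * H' s ≥ 0) →
      IsLocalMin H tstar → H tstar < 0 →
      (H tstar) ^ 2 ≥ (H 0) ^ 2 + (H' 0) ^ 2 / Jp) := by
  have key : ∀ t ≥ (0 : ℝ), (∀ s ∈ Set.Icc (0 : ℝ) t, H s * H' s ≥ 0) →
      (H t) ^ 2 + (H' t) ^ 2 / Jp ≥ (H 0) ^ 2 + (H' 0) ^ 2 / Jp := by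
    intro t ht hs
    set E : ℝ → ℝ := fun s => (H s) ^ 2 + (H' s) ^ 2 / Jp with hE
    set E' : ℝ → ℝ := fun s => 2 * H s * H' s + 2 * H' s * (-(J s) * H s) / Jp with hE'
    have hEd : ∀ s ∈ Set.Ici (0:ℝ), HasDerivAt E (E' s) s := by
      intro s hs0
      exact (((hH s hs0).pow 2).add (((hH' s hs0).pow 2).div_const Jp)).congr_deriv (by
        simp only [E']; ring)
    have mono : MonotoneOn E (Set.Icc 0 t) := by
      apply monotoneOn_of_hasDerivWithinAt_nonneg (convex_Icc 0 t)
      · exact fun s hsm => ((hEd s hsm.1).continuousAt).continuousWithinAt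
      · intro s hsm
        rw [interior_Icc] at hsm
        exact (hEd s (le_of_lt hsm.1)).hasDerivWithinAt
      · intro s hsm
        rw [interior_Icc] at hsm
        have h1 : H s * H' s ≥ 0 := hs s ⟨le_of_lt hsm.1, le_of_lt hsm.2⟩
        have h2 : J s ≤ Jp := hJle s (le_of_lt hsm.1)
        have : E' s = 2 * (H s * H' s) * ((Jp - J s) / Jp) := by
          simp only [E']; field_simp; ring
        rw [this]
        exact mul_nonneg (mul_nonneg (by norm_num) h1) (div_nonneg (by linarith) hJp.le)
    exact mono (Set.left_mem_Icc.mpr ht) (Set.right_mem_Icc.mpr ht) ht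
  refine ⟨key, fun t ht hs hmin hneg => ?_⟩
  have hd0 : H' t = 0 := by
    have := hmin.hasDerivAt_eq_zero (hH t ht)
    exact this
  have := key t ht hs
  rw [hd0] at this
  simpa using this
end

section
/- Let d ≥ 2, ν ≥ 0, and (F,G) solve F' = -F² - G - νF, G' = F - dFG with G(0) < 1/d. Let G₋ < 0 < G₊ < 1/d be the two roots with F = 0 of the level-set equation Φ(G,0) = Φ(G₀,F₀) of the frictionless first integral Φ. Then for all t ≥ 0, G₋ ≤ G(t) ≤ G₊ and F(t)² ≤ F₊², where F₊² is the maximum of F² on the level curve Φ(G,F) = Φ(G₀,F₀). In particular the trajectory is bounded. -/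
/-- The frictionless first integral of the characteristic system in dimension
`d`: the logarithmic formula for `d = 2` and the power formula otherwise. -/
noncomputable def coldPlasmaPhi (d : ℕ) (g f : ℝ) : ℝ :=
  if d = 2 then
    (2 * f ^ 2 + (1 - 2 * g) * Real.log (1 - 2 * g) + 1) / (2 * (1 - 2 * g))
  else
    (((d : ℝ) - 2) * f ^ 2 - 2 * g + 1)
      / (((d : ℝ) - 2) * (1 - (d : ℝ) * g) ^ ((2 : ℝ) / d))

lemma phi_decomp (d : ℕ) (hd : 2 ≤ d) (g f : ℝ) (hg : 0 < 1 - (d:ℝ) * g) :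
    coldPlasmaPhi d g f
      = f ^ 2 * (1 - (d:ℝ) * g) ^ (-((2:ℝ)/d)) + coldPlasmaPhi d g 0 := by
  unfold coldPlasmaPhi
  rcases eq_or_ne d 2 with h2 | h2
  · subst h2
    simp only [if_pos rfl]
    push_cast
    rw [show -((2:ℝ)/2) = (-1 : ℝ) by norm_num, Real.rpow_neg_one]
    have hu : (1 - 2*g) ≠ 0 := by push_cast at hg; nlinarith
    field_simp
    ring
  · rw [if_neg h2, if_neg h2]
    have hd3 : (3:ℕ) ≤ d := by omega
    have hd2 : (2:ℝ) < d := by exact_mod_cast by omega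
    have hu : (0:ℝ) < (1 - (d:ℝ)*g) ^ ((2:ℝ)/d) := Real.rpow_pos_of_pos hg _
    rw [show -((2:ℝ)/d) = -((2:ℝ)/d) from rfl, Real.rpow_neg hg.le]
    have h1 : ((d:ℝ) - 2) ≠ 0 := by linarith
    field_simp
    ring

lemma phi0_hasDerivAt (d : ℕ) (hd : 2 ≤ d) (g : ℝ) (hg : 0 < 1 - (d:ℝ)*g) :
    HasDerivAt (fun x => coldPlasmaPhi d x 0)
      (2 * g * (1 - (d:ℝ) * g) ^ (-((2:ℝ)/d) - 1)) g := by
  rcases eq_or_ne d 2 with h2 | h2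
  · subst h2
    have hg2 : (0:ℝ) < 1 - 2*g := by push_cast at hg; linarith
    have hu : (1 - 2*g) ≠ 0 := ne_of_gt hg2
    have hlin : HasDerivAt (fun x : ℝ => 1 - 2*x) (-2) g := by
      simpa using ((hasDerivAt_id g).const_mul (2:ℝ)).const_sub 1
    have hlog : HasDerivAt (fun x : ℝ => Real.log (1 - 2*x)) ((-2)/(1-2*g)) g :=
      hlin.log hu
    have hn : HasDerivAt (fun x : ℝ => 2*(0:ℝ)^2 + (1-2*x) * Real.log (1-2*x) + 1)
        ((-2) * Real.log (1-2*g) + (1-2*g) * ((-2)/(1-2*g))) g :=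
      ((hlin.mul hlog).const_add _).add_const _
    have hm : HasDerivAt (fun x : ℝ => 2*(1-2*x)) (2 * (-2)) g := hlin.const_mul 2
    have hm0 : 2*(1-2*g) ≠ 0 := by positivity
    have := hn.div hm hm0
    have heq : ∀ x : ℝ, coldPlasmaPhi 2 x 0
        = (2*(0:ℝ)^2 + (1-2*x) * Real.log (1-2*x) + 1) / (2*(1-2*x)) := by
      intro x; simp [coldPlasmaPhi]
    rw [show (fun x => coldPlasmaPhi 2 x 0)
        = fun x => (2*(0:ℝ)^2 + (1-2*x) * Real.log (1-2*x) + 1) / (2*(1-2*x)) from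
        funext heq]
    have e2 : (1 - (2:ℕ)*g : ℝ) ^ (-((2:ℝ)/(2:ℕ)) - 1) = ((1-2*g)*(1-2*g))⁻¹ := by
      push_cast
      rw [show -((2:ℝ)/2) - 1 = -(2:ℝ) by norm_num]
      rw [show (-2 : ℝ) = ((-2 : ℤ) : ℝ) by norm_num, Real.rpow_intCast]
      rw [zpow_neg, zpow_two]
    have hval : (((-2) * Real.log (1-2*g) + (1-2*g) * ((-2)/(1-2*g))) * (2*(1-2*g))
          - (2*(0:ℝ)^2 + (1-2*g)*Real.log (1-2*g) + 1) * (2*-2)) / (2*(1-2*g))^2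
        = 2*g*(1 - ((2:ℕ):ℝ)*g) ^ (-((2:ℝ)/(2:ℕ)) - 1) := by
      rw [e2]
      field_simp
      ring
    exact hval ▸ this
  · have hd3 : (2:ℝ) < d := by exact_mod_cast by omega
    have hdne : (d:ℝ) ≠ 0 := by positivity
    have hd20 : ((d:ℝ) - 2) ≠ 0 := by linarith
    set u := 1 - (d:ℝ)*g with hu
    have hA : (0:ℝ) < u ^ ((2:ℝ)/d) := Real.rpow_pos_of_pos hg _
    have hlin : HasDerivAt (fun x : ℝ => 1 - (d:ℝ)*x) (-(d:ℝ)) g := by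
      simpa using ((hasDerivAt_id g).const_mul (d:ℝ)).const_sub 1
    have hn : HasDerivAt (fun x : ℝ => ((d:ℝ)-2)*(0:ℝ)^2 - 2*x + 1)
        (-(2*1)) g :=
      (((hasDerivAt_id g).const_mul (2:ℝ)).const_sub _).add_const 1
    have hpow : HasDerivAt (fun x : ℝ => (1 - (d:ℝ)*x) ^ ((2:ℝ)/d))
        (-(d:ℝ) * ((2:ℝ)/d) * u ^ ((2:ℝ)/d - 1)) g :=
      hlin.rpow_const (Or.inl (ne_of_gt hg))
    have hm : HasDerivAt (fun x : ℝ => ((d:ℝ)-2) * (1 - (d:ℝ)*x) ^ ((2:ℝ)/d))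
        (((d:ℝ)-2) * (-(d:ℝ) * ((2:ℝ)/d) * u ^ ((2:ℝ)/d - 1))) g :=
      hpow.const_mul _
    have hm0 : ((d:ℝ)-2) * u ^ ((2:ℝ)/d) ≠ 0 := by positivity
    have hdiv := hn.div hm hm0
    have heq : (fun x => coldPlasmaPhi d x 0)
        = fun x => (((d:ℝ)-2)*(0:ℝ)^2 - 2*x + 1)
            / (((d:ℝ)-2) * (1 - (d:ℝ)*x) ^ ((2:ℝ)/d)) := by
      funext x; simp [coldPlasmaPhi, h2]
    rw [heq]
    have e1 : u ^ ((2:ℝ)/d - 1) = u ^ ((2:ℝ)/d) / u := by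
      rw [Real.rpow_sub hg, Real.rpow_one]
    have e2 : u ^ (-((2:ℝ)/d) - 1) = (u ^ ((2:ℝ)/d) * u)⁻¹ := by
      rw [show -((2:ℝ)/d) - 1 = -((2:ℝ)/d + 1) by ring, Real.rpow_neg hg.le,
        Real.rpow_add hg, Real.rpow_one]
    have hune : u ≠ 0 := ne_of_gt hg
    have hval : ((-(2*1)) * (((d:ℝ)-2) * u ^ ((2:ℝ)/d))
          - (((d:ℝ)-2)*(0:ℝ)^2 - 2*g + 1) * (((d:ℝ)-2) * (-(d:ℝ) * ((2:ℝ)/d) * u ^ ((2:ℝ)/d - 1))))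
          / (((d:ℝ)-2) * u ^ ((2:ℝ)/d))^2
        = 2*g*(1 - (d:ℝ)*g) ^ (-((2:ℝ)/d) - 1) := by
      rw [e1, e2]
      have hA' : u ^ ((2:ℝ)/d) ≠ 0 := ne_of_gt hA
      field_simp
      ring
    exact hval ▸ hdiv

lemma u_pos (d : ℕ) (F G : ℝ → ℝ) (hFc : Continuous F)
    (hG : ∀ t, HasDerivAt G (F t - (d : ℝ) * F t * G t) t)
    (h0 : 0 < 1 - (d:ℝ) * G 0) : ∀ t, 0 < 1 - (d:ℝ) * G t := by
  set I : ℝ → ℝ := fun t => ∫ s in (0:ℝ)..t, (d:ℝ) * F s with hIdef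
  have hI : ∀ t, HasDerivAt I ((d:ℝ) * F t) t := fun t =>
    ((continuous_const.mul hFc).integral_hasStrictDerivAt 0 t).hasDerivAt
  set w : ℝ → ℝ := fun t => (1 - (d:ℝ) * G t) * Real.exp (I t) with hwdef
  have hu : ∀ t, HasDerivAt (fun t => 1 - (d:ℝ) * G t)
      (-((d:ℝ) * (F t - (d:ℝ) * F t * G t))) t := fun t => by
    simpa using ((hG t).const_mul (d:ℝ)).const_sub 1
  have hw0 : ∀ t, HasDerivAt w 0 t := by
    intro t
    have h : HasDerivAt w _ t := (hu t).mul ((hI t).exp)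
    convert h using 1
    ring
  have hconst : ∀ t, w t = w 0 := fun t =>
    is_const_of_deriv_eq_zero (fun x => (hw0 x).differentiableAt)
      (fun x => (hw0 x).deriv) t 0
  intro t
  have hexp : 0 < Real.exp (I t) := Real.exp_pos _
  have h1 : w 0 = 1 - (d:ℝ) * G 0 := by
    simp [hwdef, hIdef]
  have h2 : (1 - (d:ℝ) * G t) * Real.exp (I t) = 1 - (d:ℝ) * G 0 := by
    have := hconst t; rw [h1] at this; exact this
  nlinarith [h0, hexp, h2]

lemma E_hasDerivAt (d : ℕ) (hd : 2 ≤ d) (ν : ℝ) (F G : ℝ → ℝ)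
    (hF : ∀ t, HasDerivAt F (-(F t) ^ 2 - G t - ν * F t) t)
    (hG : ∀ t, HasDerivAt G (F t - (d : ℝ) * F t * G t) t)
    (hup : ∀ t, 0 < 1 - (d:ℝ) * G t) (t : ℝ) :
    HasDerivAt (fun t => (F t) ^ 2 * (1 - (d:ℝ) * G t) ^ (-((2:ℝ)/d))
        + coldPlasmaPhi d (G t) 0)
      (-(2 * ν * (F t) ^ 2 * (1 - (d:ℝ) * G t) ^ (-((2:ℝ)/d)))) t := by
  have hd0 : (0:ℝ) < d := Nat.cast_pos.mpr (by omega)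
  have hu0 : (1 - (d:ℝ) * G t) ≠ 0 := (hup t).ne'
  have hulin : HasDerivAt (fun t => 1 - (d:ℝ) * G t)
      (-((d:ℝ) * (F t - (d:ℝ) * F t * G t))) t := by
    simpa using ((hG t).const_mul (d:ℝ)).const_sub 1
  have hpow : HasDerivAt (fun t => (1 - (d:ℝ) * G t) ^ (-((2:ℝ)/d)))
      ((-((d:ℝ) * (F t - (d:ℝ) * F t * G t))) * (-((2:ℝ)/d))
        * (1 - (d:ℝ) * G t) ^ (-((2:ℝ)/d) - 1)) t :=
    hulin.rpow_const (Or.inl hu0)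
  have hF2 : HasDerivAt (fun t => (F t) ^ 2)
      (2 * (F t) ^ 1 * (-(F t) ^ 2 - G t - ν * F t)) t := by
    have h : HasDerivAt (fun t => (F t) ^ 2) _ t := (hF t).pow 2
    simpa using h
  have hphi : HasDerivAt (fun t => coldPlasmaPhi d (G t) 0)
      ((2 * (G t) * (1 - (d:ℝ) * G t) ^ (-((2:ℝ)/d) - 1))
        * (F t - (d:ℝ) * F t * G t)) t :=
    (phi0_hasDerivAt d hd (G t) (hup t)).comp t (hG t)
  have htot : HasDerivAt (fun t => (F t) ^ 2 * (1 - (d:ℝ) * G t) ^ (-((2:ℝ)/d))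
        + coldPlasmaPhi d (G t) 0) _ t := (hF2.mul hpow).add hphi
  convert htot using 1
  have e1 : (1 - (d:ℝ) * G t) ^ (-((2:ℝ)/d) - 1)
      = (1 - (d:ℝ) * G t) ^ (-((2:ℝ)/d)) / (1 - (d:ℝ) * G t) := by
    rw [Real.rpow_sub (hup t), Real.rpow_one]
  rw [e1]
  field_simp
  ring


/-- Boundedness of trajectories: for `d ≥ 2`, `ν ≥ 0`, a solution of
`F' = -F²-G-νF`, `G' = F-dFG` with `G(0) < 1/d` stays between the roots
`G₋ < 0 < G₊ < 1/d` of `Φ(G,0) = Φ(G₀,F₀)` and satisfies `F² ≤ F₊²`, where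
`F₊²` is the maximum of `F²` on the level curve `Φ(G,F) = Φ(G₀,F₀)`. -/
theorem stmt18 (d : ℕ) (hd : 2 ≤ d) (ν : ℝ) (hν : 0 ≤ ν)
    (F G : ℝ → ℝ)
    (hF : ∀ t, HasDerivAt F (-(F t) ^ 2 - G t - ν * F t) t)
    (hG : ∀ t, HasDerivAt G (F t - (d : ℝ) * F t * G t) t)
    (hG0 : G 0 < 1 / d)
    (Gm Gp Fp : ℝ)
    (hGm : Gm < 0) (hGp : 0 < Gp) (hGp' : Gp < 1 / d)
    (hrootm : coldPlasmaPhi d Gm 0 = coldPlasmaPhi d (G 0) (F 0))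
    (hrootp : coldPlasmaPhi d Gp 0 = coldPlasmaPhi d (G 0) (F 0))
    (hFp : IsGreatest
      {y : ℝ | ∃ g f : ℝ, g < 1 / (d : ℝ) ∧
        coldPlasmaPhi d g f = coldPlasmaPhi d (G 0) (F 0) ∧ y = f ^ 2}
      (Fp ^ 2)) :
    ∀ t ≥ (0 : ℝ), Gm ≤ G t ∧ G t ≤ Gp ∧ (F t) ^ 2 ≤ Fp ^ 2 := by
  have hd0 : (0:ℝ) < d := Nat.cast_pos.mpr (by omega)
  have h00 : 0 < 1 - (d:ℝ) * G 0 := by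
    nlinarith [(lt_div_iff₀ hd0).mp hG0]
  have hFc : Continuous F :=
    continuous_iff_continuousAt.mpr fun t => (hF t).continuousAt
  have hup : ∀ t, 0 < 1 - (d:ℝ) * G t := u_pos d F G hFc hG h00
  have hlt : ∀ t, G t < 1 / (d:ℝ) := by
    intro t
    rw [lt_div_iff₀ hd0]
    nlinarith [hup t]
  set Φ₀ : ℝ := coldPlasmaPhi d (G 0) (F 0) with hPhi0
  set E : ℝ → ℝ := fun t => (F t) ^ 2 * (1 - (d:ℝ) * G t) ^ (-((2:ℝ)/d))
      + coldPlasmaPhi d (G t) 0 with hEdef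
  have hE : ∀ t, HasDerivAt E
      (-(2 * ν * (F t) ^ 2 * (1 - (d:ℝ) * G t) ^ (-((2:ℝ)/d)))) t :=
    E_hasDerivAt d hd ν F G hF hG hup
  have hanti : Antitone E := by
    apply antitone_of_deriv_nonpos (fun t => (hE t).differentiableAt)
    intro t
    rw [(hE t).deriv]
    have h1 : (0:ℝ) < (1 - (d:ℝ) * G t) ^ (-((2:ℝ)/d)) :=
      Real.rpow_pos_of_pos (hup t) _
    have h2 : 0 ≤ 2 * ν * (F t) ^ 2 * (1 - (d:ℝ) * G t) ^ (-((2:ℝ)/d)) := by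
      positivity
    linarith
  have hE0 : E 0 = Φ₀ := (phi_decomp d hd (G 0) (F 0) (hup 0)).symm
  have hcont : ∀ g : ℝ, 0 < 1 - (d:ℝ) * g →
      ContinuousAt (fun x => coldPlasmaPhi d x 0) g := fun g hg =>
    (phi0_hasDerivAt d hd g hg).continuousAt
  have hmono : StrictMonoOn (fun x => coldPlasmaPhi d x 0)
      (Set.Ico 0 (1 / (d:ℝ))) := by
    apply strictMonoOn_of_deriv_pos (convex_Ico _ _)
    · intro g hg
      have hgu : 0 < 1 - (d:ℝ) * g := by
        have := (lt_div_iff₀ hd0).mp hg.2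
        nlinarith
      exact (hcont g hgu).continuousWithinAt
    · intro g hg
      rw [interior_Ico] at hg
      have hgu : 0 < 1 - (d:ℝ) * g := by
        have := (lt_div_iff₀ hd0).mp hg.2
        nlinarith
      rw [(phi0_hasDerivAt d hd g hgu).deriv]
      have := Real.rpow_pos_of_pos hgu (-((2:ℝ)/d) - 1)
      nlinarith [hg.1]
  have hanti0 : StrictAntiOn (fun x => coldPlasmaPhi d x 0) (Set.Iic 0) := by
    apply strictAntiOn_of_deriv_neg (convex_Iic _)
    · intro g hg
      have hgu : 0 < 1 - (d:ℝ) * g := by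
        simp only [Set.mem_Iic] at hg
        nlinarith
      exact (hcont g hgu).continuousWithinAt
    · intro g hg
      rw [interior_Iic] at hg
      have hg0 : g < 0 := hg
      have hgu : 0 < 1 - (d:ℝ) * g := by nlinarith
      rw [(phi0_hasDerivAt d hd g hgu).deriv]
      have := Real.rpow_pos_of_pos hgu (-((2:ℝ)/d) - 1)
      nlinarith
  intro t ht
  have hEt : E t ≤ Φ₀ := hE0 ▸ hanti ht
  have hAt : (0:ℝ) < (1 - (d:ℝ) * G t) ^ (-((2:ℝ)/d)) :=
    Real.rpow_pos_of_pos (hup t) _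
  have hEteq : E t = (F t) ^ 2 * (1 - (d:ℝ) * G t) ^ (-((2:ℝ)/d))
      + coldPlasmaPhi d (G t) 0 := rfl
  have hphile : coldPlasmaPhi d (G t) 0 ≤ Φ₀ := by
    have h2 : 0 ≤ (F t) ^ 2 * (1 - (d:ℝ) * G t) ^ (-((2:ℝ)/d)) := by positivity
    linarith [hEteq ▸ hEt]
  refine ⟨?_, ?_, ?_⟩
  · by_contra h
    push_neg at h
    have h1 : coldPlasmaPhi d Gm 0 < coldPlasmaPhi d (G t) 0 :=
      hanti0 (Set.mem_Iic.mpr (by linarith)) (Set.mem_Iic.mpr hGm.le) h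
    rw [hrootm] at h1
    linarith
  · by_contra h
    push_neg at h
    have h1 : coldPlasmaPhi d Gp 0 < coldPlasmaPhi d (G t) 0 :=
      hmono (Set.mem_Ico.mpr ⟨hGp.le, hGp'⟩)
        (Set.mem_Ico.mpr ⟨by linarith, hlt t⟩) h
    rw [hrootp] at h1
    linarith
  · set A := (1 - (d:ℝ) * G t) ^ (-((2:ℝ)/d)) with hA
    set s := (Φ₀ - coldPlasmaPhi d (G t) 0) / A with hs
    have hs0 : 0 ≤ s := div_nonneg (by linarith) hAt.le
    have hFle : (F t) ^ 2 ≤ s := by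
      rw [hs, le_div_iff₀ hAt]
      linarith [hEteq ▸ hEt]
    have hmem : s ∈ {y : ℝ | ∃ g f : ℝ, g < 1 / (d : ℝ) ∧
        coldPlasmaPhi d g f = coldPlasmaPhi d (G 0) (F 0) ∧ y = f ^ 2} := by
      refine ⟨G t, Real.sqrt s, hlt t, ?_, (Real.sq_sqrt hs0).symm⟩
      rw [phi_decomp d hd (G t) (Real.sqrt s) (hup t), Real.sq_sqrt hs0, hs,
        div_mul_cancel₀ _ hAt.ne']
      ring
    exact hFle.trans (hFp.2 hmem)
end
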